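/- Let R > 0 and m > 0 with m < 2R³. Then the equation (R²−α²)α/(R²+α²)² = ∛m/(4·∛2·R²) has exactly two solutions α in the open interval (0,R), one in (0,(√2−1)R) and one in ((√2−1)R, R). -/

import Mathlib

set_option maxHeartbeats 2000000 in
theorem two_body_exactly_two_solutions (R m : ℝ) (hR : 0 < R) (hm : 0 < m)
    (hmass : m < 2 * R ^ 3) :
    ∃ α₁ ∈ Set.Ioo (0 : ℝ) ((Real.sqrt 2 - 1) * R),
      ∃ α₂ ∈ Set.Ioo ((Real.sqrt 2 - 1) * R) R,
        (R ^ 2 - α₁ ^ 2) * α₁ / (R ^ 2 + α₁ ^ 2) ^ 2 =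
            m ^ ((1 : ℝ) / 3) / (4 * (2 : ℝ) ^ ((1 : ℝ) / 3) * R ^ 2) ∧
          (R ^ 2 - α₂ ^ 2) * α₂ / (R ^ 2 + α₂ ^ 2) ^ 2 =
            m ^ ((1 : ℝ) / 3) / (4 * (2 : ℝ) ^ ((1 : ℝ) / 3) * R ^ 2) ∧
          ∀ α ∈ Set.Ioo (0 : ℝ) R,
            (R ^ 2 - α ^ 2) * α / (R ^ 2 + α ^ 2) ^ 2 =
                m ^ ((1 : ℝ) / 3) / (4 * (2 : ℝ) ^ ((1 : ℝ) / 3) * R ^ 2) →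
              α = α₁ ∨ α = α₂ := by
  set s := Real.sqrt 2 with hs_def
  have hs2 : s ^ 2 = 2 := Real.sq_sqrt (by norm_num)
  have hs1 : 1 < s := by nlinarith [Real.sqrt_nonneg 2]
  have hs15 : s < 3/2 := by nlinarith [Real.sqrt_nonneg 2]
  set a := (s - 1) * R with ha_def
  have ha0 : 0 < a := mul_pos (by linarith) hR
  have haR : a < R := by nlinarith
  have ha2 : a ^ 2 = (3 - 2*s) * R ^ 2 := by
    rw [ha_def]; linear_combination (R:ℝ)^2 * hs2
  set f : ℝ → ℝ := fun α => (R ^ 2 - α ^ 2) * α / (R ^ 2 + α ^ 2) ^ 2 with hf_def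
  set c := m ^ ((1:ℝ)/3) / (4 * (2:ℝ) ^ ((1:ℝ)/3) * R ^ 2) with hc_def
  have hmrp : 0 < m ^ ((1:ℝ)/3) := Real.rpow_pos_of_pos hm _
  have h2rp : 0 < (2:ℝ) ^ ((1:ℝ)/3) := Real.rpow_pos_of_pos (by norm_num) _
  have hc0 : 0 < c := by rw [hc_def]; positivity
  have hm3 : m ^ ((1:ℝ)/3) < 2 ^ ((1:ℝ)/3) * R := by
    have h1 : m ^ ((1:ℝ)/3) < (2 * R ^ 3) ^ ((1:ℝ)/3) :=
      Real.rpow_lt_rpow hm.le hmass (by norm_num)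
    have h2 : (2 * R ^ 3 : ℝ) ^ ((1:ℝ)/3) = 2 ^ ((1:ℝ)/3) * R := by
      rw [Real.mul_rpow (by norm_num) (by positivity)]
      congr 1
      rw [← Real.rpow_natCast R 3, ← Real.rpow_mul hR.le]
      norm_num
    linarith [h2 ▸ h1]
  have hc_lt : c < 1 / (4 * R) := by
    rw [hc_def, div_lt_div_iff₀ (by positivity) (by positivity)]
    nlinarith [mul_pos h2rp hR]
  -- derivative of f
  have hder : ∀ x : ℝ, HasDerivAt f ((R^4 - 6*R^2*x^2 + x^4)/(R^2+x^2)^3) x := by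
    intro x
    have hden : (R^2 + x^2) ≠ 0 := by positivity
    have h1 : HasDerivAt (fun α : ℝ => (R ^ 2 - α ^ 2) * α) (R^2 - 3*x^2) x := by
      have := (((hasDerivAt_pow 2 x).const_sub (R^2)).mul (hasDerivAt_id x))
      refine this.congr_deriv ?_
      simp only [id_eq]
      ring
    have h2 : HasDerivAt (fun α : ℝ => (R ^ 2 + α ^ 2) ^ 2) (4*x*(R^2+x^2)) x := by
      have := ((hasDerivAt_pow 2 x).const_add (R^2)).pow 2
      refine this.congr_deriv ?_
      norm_num
      ring
    have := h1.div h2 (by positivity)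
    refine this.congr_deriv ?_
    field_simp
    ring
  have hcont : Continuous f := by
    rw [continuous_iff_continuousAt]; exact fun x => (hder x).continuousAt
  have hmono : StrictMonoOn f (Set.Icc 0 a) := by
    apply strictMonoOn_of_deriv_pos (convex_Icc 0 a) hcont.continuousOn
    intro x hx
    rw [interior_Icc] at hx
    rw [(hder x).deriv]
    apply div_pos
    · have hx2 : x ^ 2 < (3 - 2*s) * R ^ 2 := by nlinarith [hx.1, hx.2, ha2, ha0]
      have hx2' : x ^ 2 < (3 + 2*s) * R ^ 2 := by nlinarith [hx.1, hx.2, ha0, hs1]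
      have hkey : ((3-2*s)*R^2 - x^2) * ((3+2*s)*R^2 - x^2)
          = R^4 - 6*R^2*x^2 + x^4 := by linear_combination (-(4:ℝ)*R^4) * hs2
      rw [← hkey]
      exact mul_pos (by linarith) (by linarith)
    · positivity
  have hanti : StrictAntiOn f (Set.Icc a R) := by
    apply strictAntiOn_of_deriv_neg (convex_Icc a R) hcont.continuousOn
    intro x hx
    rw [interior_Icc] at hx
    rw [(hder x).deriv]
    apply div_neg_of_neg_of_pos
    · have hx2 : (3 - 2*s) * R ^ 2 < x ^ 2 := by nlinarith [hx.1, hx.2, ha2, ha0]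
      have hx2' : x ^ 2 < (3 + 2*s) * R ^ 2 := by nlinarith [hx.1, hx.2, ha0, hs1, hR]
      have hkey : (x^2 - (3-2*s)*R^2) * ((3+2*s)*R^2 - x^2)
          = -(R^4 - 6*R^2*x^2 + x^4) := by linear_combination ((4:ℝ)*R^4) * hs2
      have hpos := mul_pos (sub_pos.2 hx2) (sub_pos.2 hx2')
      rw [hkey] at hpos
      linarith
    · positivity
  have hf0 : f 0 = 0 := by rw [hf_def]; norm_num
  have hfR : f R = 0 := by rw [hf_def]; norm_num
  have hfa : f a = 1 / (4 * R) := by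
    rw [hf_def]
    have hden : ((R:ℝ)^2 + a^2)^2 ≠ 0 := by positivity
    rw [div_eq_div_iff hden (by positivity)]
    rw [ha_def]
    linear_combination (-(R:ℝ)^4*(s^2-2)) * hs2
  have hcmem : c ∈ Set.Ioo (f 0) (f a) := by
    rw [hf0, hfa]; exact ⟨hc0, hc_lt⟩
  obtain ⟨α₁, hα₁_mem, hα₁⟩ := intermediate_value_Ioo ha0.le hcont.continuousOn hcmem
  have hcmem' : c ∈ Set.Ioo (f R) (f a) := by
    rw [hfR, hfa]; exact ⟨hc0, hc_lt⟩
  obtain ⟨α₂, hα₂_mem, hα₂⟩ := intermediate_value_Ioo' haR.le hcont.continuousOn hcmem'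
  refine ⟨α₁, hα₁_mem, α₂, hα₂_mem, hα₁, hα₂, ?_⟩
  intro α hα hfα
  have hfα' : f α = c := hfα
  rcases le_total α a with h | h
  · left
    exact hmono.injOn ⟨hα.1.le, h⟩ ⟨hα₁_mem.1.le, hα₁_mem.2.le⟩ (hfα'.trans hα₁.symm)
  · right
    exact hanti.injOn ⟨h, hα.2.le⟩ ⟨hα₂_mem.1.le, hα₂_mem.2.le⟩ (hfα'.trans hα₂.symm)
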